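/- Let z > 0 and let a ≤ b and c ≤ d be real numbers. Define f(x, y) := -(1/2)·z²·exp(-(x - y)²/z²) - (√π/2)·z·(x - y)·erf((x - y)/z), where erf(t) := (2/√π) ∫_0^t exp(-u²) du. Then ∫_a^b ∫_c^d exp(-(x - y)²/z²) dy dx = f(b, d) - f(b, c) - f(a, d) + f(a, c). -/

import Mathlib

open MeasureTheory Real

/-- The error function `erf t = (2/√π) ∫₀^t exp(-u²) du`. -/
noncomputable def erf (t : ℝ) : ℝ :=
  (2 / Real.sqrt π) * ∫ u in (0 : ℝ)..t, Real.exp (-u ^ 2)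

/-- The mixed antiderivative `f(x,y)` of the Gaussian kernel used by Verdict. -/
noncomputable def F (z x y : ℝ) : ℝ :=
  -(1 / 2) * (z ^ 2 * Real.exp (-(x - y) ^ 2 / z ^ 2)) -
    (Real.sqrt π / 2) * z * (x - y) * erf ((x - y) / z)

lemma gauss_cont : Continuous fun u : ℝ => Real.exp (-u ^ 2) := by
  continuity

lemma erf_hasDerivAt (t : ℝ) :
    HasDerivAt erf (2 / Real.sqrt π * Real.exp (-t ^ 2)) t := by
  have h : HasDerivAt (fun t => ∫ u in (0 : ℝ)..t, Real.exp (-u ^ 2))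
      (Real.exp (-t ^ 2)) t :=
    intervalIntegral.integral_hasDerivAt_right
      (gauss_cont.intervalIntegrable _ _)
      (gauss_cont.aestronglyMeasurable.stronglyMeasurableAtFilter)
      gauss_cont.continuousAt
  exact h.const_mul (2 / Real.sqrt π)

lemma erf_continuous : Continuous erf :=
  continuous_iff_continuousAt.2 fun t => (erf_hasDerivAt t).continuousAt

/-- derivative in `y` of `y ↦ -(√π/2) z erf ((x-y)/z)` is the Gaussian kernel. -/
lemma inner_anti (z : ℝ) (hz : 0 < z) (x y : ℝ) :
    HasDerivAt (fun y => -(Real.sqrt π / 2) * z * erf ((x - y) / z))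
      (Real.exp (-(x - y) ^ 2 / z ^ 2)) y := by
  have h1 : HasDerivAt (fun y : ℝ => (x - y) / z) (-1 / z) y := by
    simpa using (((hasDerivAt_id y).const_sub x).div_const z)
  have h2 := ((erf_hasDerivAt ((x - y) / z)).comp y h1).const_mul
      (-(Real.sqrt π / 2) * z)
  refine h2.congr_deriv (Eq.symm ?_)
  have hπ : Real.sqrt π ≠ 0 := (Real.sqrt_pos.2 Real.pi_pos).ne'
  rw [div_pow, neg_div]
  field_simp

/-- derivative in `x` of `x ↦ F z x y`. -/
lemma outer_anti (z : ℝ) (hz : 0 < z) (y x : ℝ) :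
    HasDerivAt (fun x => F z x y)
      (-(Real.sqrt π / 2) * z * erf ((x - y) / z)) x := by
  have hπ : Real.sqrt π ≠ 0 := (Real.sqrt_pos.2 Real.pi_pos).ne'
  have h0 : HasDerivAt (fun x : ℝ => x - y) 1 x := (hasDerivAt_id x).sub_const y
  have h1 : HasDerivAt (fun x : ℝ => -(x - y) ^ 2 / z ^ 2)
      (-(2 * (x - y)) / z ^ 2) x := by
    simpa using ((h0.pow 2).neg.div_const (z ^ 2))
  have h2 : HasDerivAt (fun x : ℝ => Real.exp (-(x - y) ^ 2 / z ^ 2))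
      (Real.exp (-(x - y) ^ 2 / z ^ 2) * (-(2 * (x - y)) / z ^ 2)) x := h1.exp
  have h3 : HasDerivAt (fun x : ℝ => (x - y) / z) (1 / z) x := by
    simpa using h0.div_const z
  have h4 : HasDerivAt (fun x : ℝ => erf ((x - y) / z))
      (2 / Real.sqrt π * Real.exp (-((x - y) / z) ^ 2) * (1 / z)) x :=
    by have := (erf_hasDerivAt ((x - y) / z)).comp x h3; exact this
  have h5 : HasDerivAt (fun x : ℝ => (x - y) * erf ((x - y) / z))
      (1 * erf ((x - y) / z) +
        (x - y) * (2 / Real.sqrt π * Real.exp (-((x - y) / z) ^ 2) * (1 / z))) x :=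
    h0.mul h4
  have h := ((h2.const_mul (z ^ 2)).const_mul (-(1 / 2))).sub
    (h5.const_mul (Real.sqrt π / 2 * z))
  have heq : (fun x => F z x y) = fun x =>
      -(1 / 2) * (z ^ 2 * Real.exp (-(x - y) ^ 2 / z ^ 2)) -
        Real.sqrt π / 2 * z * ((x - y) * erf ((x - y) / z)) := by
    funext x; simp [F]; ring
  rw [heq]
  refine h.congr_deriv (Eq.symm ?_)
  rw [div_pow, neg_div]
  field_simp
  ring

/-- Closed form of the double integral of the Gaussian kernel over a rectangle:
`∫_a^b ∫_c^d exp(-(x-y)²/z²) dy dx = f(b,d) - f(b,c) - f(a,d) + f(a,c)`. -/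
theorem double_integral_gaussian_kernel (z : ℝ) (hz : 0 < z)
    (a b c d : ℝ) (hab : a ≤ b) (hcd : c ≤ d) :
    (∫ x in a..b, ∫ y in c..d, Real.exp (-(x - y) ^ 2 / z ^ 2)) =
      F z b d - F z b c - F z a d + F z a c := by
  have hπ : Real.sqrt π ≠ 0 := (Real.sqrt_pos.2 Real.pi_pos).ne'
  have hinner : ∀ x : ℝ, (∫ y in c..d, Real.exp (-(x - y) ^ 2 / z ^ 2)) =
      -(Real.sqrt π / 2) * z * erf ((x - d) / z) -
        -(Real.sqrt π / 2) * z * erf ((x - c) / z) := by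
    intro x
    apply intervalIntegral.integral_eq_sub_of_hasDerivAt
    · intro y _; exact inner_anti z hz x y
    · apply Continuous.intervalIntegrable
      continuity
  have hcont : Continuous fun x => -(Real.sqrt π / 2) * z * erf ((x - d) / z) -
      -(Real.sqrt π / 2) * z * erf ((x - c) / z) := by
    have := erf_continuous
    fun_prop
  simp only [hinner]
  have houter : ∀ x ∈ Set.uIcc a b,
      HasDerivAt (fun x => F z x d - F z x c)
        (-(Real.sqrt π / 2) * z * erf ((x - d) / z) -
          -(Real.sqrt π / 2) * z * erf ((x - c) / z)) x := fun x _ =>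
    (outer_anti z hz d x).sub (outer_anti z hz c x)
  rw [intervalIntegral.integral_eq_sub_of_hasDerivAt houter
    (hcont.intervalIntegrable a b)]
  ring
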